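/- Let κ be a regular uncountable cardinal and T a uniformly homogeneous streamlined κ-tree. Then V(T) coincides with the set of all limit ordinals α < κ for which there exists a vanishing α-branch of T. -/

import Mathlib

noncomputable section

open Ordinal Set

/-- A node of a streamlined tree over `κ` is a function `s : α → κ` for an ordinal `α`;
we code it by its graph, a set of pairs `(ε, v)`. -/
abbrev PNode : Type 1 := Set (Ordinal × Ordinal)

/-- The set of ordinals in the domain of a coded node. -/
def ndom (s : PNode) : Set Ordinal := {ε | ∃ v, (ε, v) ∈ s}

/-- `s` codes a function from (the ordinals below) `α` to (the ordinals below) `ν`. -/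
def IsNodeOf (ν α : Ordinal) (s : PNode) : Prop :=
  (∀ p ∈ s, p.1 < α ∧ p.2 < ν) ∧ ∀ ε, ε < α → ∃! v : Ordinal, (ε, v) ∈ s

/-- The restriction `s ↾ α` of a node. -/
def nrestrict (s : PNode) (α : Ordinal) : PNode := {p ∈ s | p.1 < α}

/-- The node `s * t`, with domain `dom t`, agreeing with `s` on `dom s` and with `t` elsewhere. -/
def nstar (s t : PNode) : PNode :=
  {p ∈ s | p.1 ∈ ndom t} ∪ {p ∈ t | p.1 ∉ ndom s}

/-- The `α`-th level of a tree. -/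
def level (T : Set PNode) (α : Ordinal) : Set PNode := {t ∈ T | ndom t = Set.Iio α}

/-- A streamlined tree: closed under restrictions. -/
def IsStreamlined (T : Set PNode) : Prop := ∀ t ∈ T, ∀ α : Ordinal, nrestrict t α ∈ T

/-- Uniform homogeneity. -/
def UnifHomog (T : Set PNode) : Prop := ∀ s ∈ T, ∀ t ∈ T, nstar s t ∈ T

/-- Normality for a tree of height `h`. -/
def IsNormalOfHeight (T : Set PNode) (h : Ordinal) : Prop :=
  ∀ x ∈ T, ∀ α, α < h → ∃ y ∈ level T α, x ⊆ y ∨ y ⊆ x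

/-- Two nodes are mutually exclusive iff they disagree everywhere on their common domain. -/
def MutExc (s t : PNode) : Prop :=
  ∀ ε v w : Ordinal, (ε, v) ∈ s → (ε, w) ∈ t → v ≠ w

/-- `s =* t` : same domain and agreement on a final segment of the domain. -/
def EqStar (s t : PNode) : Prop :=
  ndom s = ndom t ∧ ∃ α ∈ ndom s, ∀ β, α ≤ β → ∀ v : Ordinal, ((β, v) ∈ s ↔ (β, v) ∈ t)

/-- `Δ(s,t)`: the least element of `{dom s, dom t} ∪ {δ ∈ dom s ∩ dom t ∣ s(δ) ≠ t(δ)}`. -/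
def nDelta (s t : PNode) : Ordinal :=
  sInf ({δ | δ ∉ ndom s} ∪ {δ | δ ∉ ndom t} ∪
    {δ | ∃ v w : Ordinal, (δ, v) ∈ s ∧ (δ, w) ∈ t ∧ v ≠ w})

/-- `supp(f,g)` for two `θ`-sequences of nodes. -/
def supp (θo : Ordinal) (f g : Ordinal → PNode) : Set Ordinal :=
  {τ | τ < θo ∧ (f τ ⊆ g τ ∨ g τ ⊆ f τ)}

/-- An `α`-branch of `T`. -/
def IsBranch (T : Set PNode) (α : Ordinal) (B : Set PNode) : Prop :=
  B ⊆ T ∧ (∀ x ∈ B, ∀ y ∈ B, x ⊆ y ∨ y ⊆ x) ∧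
    {β : Ordinal | ∃ x ∈ B, ndom x = Set.Iio β} = Set.Iio α

/-- The set `V(T)` of vanishing levels of `T`. -/
def VSet (T : Set PNode) : Set Ordinal :=
  {α | Order.IsSuccLimit α ∧ ∀ x ∈ T, (∃ β, β < α ∧ ndom x = Set.Iio β) →
    ∃ B, IsBranch T α B ∧ x ∈ B ∧ ⋃₀ B ∉ T}

/-- A closed set of ordinals. -/
def OrdClosed (A : Set Ordinal) : Prop :=
  ∀ α : Ordinal, Order.IsSuccLimit α → (∀ β, β < α → (A ∩ Set.Ioo β α).Nonempty) → α ∈ A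

/-- A mutually exclusive `F`-ascent path (`F` given via the membership predicate `InF`)
through a tree `T` of height `γ`. -/
def MEAscentPath (θo : Ordinal) (InF : Set Ordinal → Prop) (T : Set PNode) (γ : Ordinal)
    (f : Ordinal → Ordinal → PNode) : Prop :=
  (∀ α, α < γ → ∀ τ, τ < θo → f α τ ∈ level T α) ∧
  (∀ α β, α < β → β < γ → InF (supp θo (f α) (f β))) ∧
  (∀ α, 0 < α → α < γ → ∀ τ τ', τ < θo → τ' < θo → τ ≠ τ' → MutExc (f α τ) (f α τ'))

/-- A condition: a pair `⟨T, f⟩` together with the ordinal `η` such that `T` has height `η + 1`. -/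
structure SCond : Type 1 where
  T : Set PNode
  f : Ordinal.{0} → Ordinal.{0} → PNode
  η : Ordinal.{0}

/-- Membership in the filter generated by the decreasing sequence `X` of length `ζ`. -/
def InFX (ζ : Ordinal) (X : Ordinal → Set Ordinal) (Y : Set Ordinal) : Prop :=
  ∃ ξ, ξ < ζ ∧ X ξ ⊆ Y

/-- `p` is a condition of the forcing `𝕊^κ_𝐗`. -/
def IsSCondX (κ : Cardinal) (θo : Ordinal) (InF : Set Ordinal → Prop) (p : SCond) : Prop :=
  (∀ t ∈ p.T, ∃ α, α ≤ p.η ∧ IsNodeOf κ.ord α t) ∧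
  IsStreamlined p.T ∧
  UnifHomog p.T ∧
  IsNormalOfHeight p.T (p.η + 1) ∧
  (∀ α, α ≤ p.η → (level p.T α).Nonempty) ∧
  (∀ α, α ≤ p.η → Cardinal.mk ↥(level p.T α) < Cardinal.lift.{1} κ) ∧
  MEAscentPath θo InF p.T (p.η + 1) p.f ∧
  OrdClosed (VSet p.T) ∧
  (Order.IsSuccLimit p.η → p.η ∈ VSet p.T) ∧
  (∀ α, 0 < α → α ≤ p.η → ∀ t ∈ level p.T α, InF {τ | τ < θo ∧ MutExc t (p.f α τ)})

/-- `p ≤ q` in `𝕊^κ_𝐗` (and in `𝕊^κ_θ`): `p` end-extends `q` in both coordinates. -/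
def sext (θo : Ordinal) (p q : SCond) : Prop :=
  q.η ≤ p.η ∧
  (∀ t : PNode, t ∈ q.T ↔ (t ∈ p.T ∧ ∃ α, α ≤ q.η ∧ ndom t = Set.Iio α)) ∧
  (∀ α, α ≤ q.η → ∀ τ, τ < θo → p.f α τ = q.f α τ)

/-- Even ordinals (limit ordinals are even). -/
def EvenOrd (β : Ordinal) : Prop := ∃ γ : Ordinal, β = 2 * γ

/-- Player II has a winning strategy in the game `⅁_μ(P)`: she can choose conditions at all
even (incl. limit) stages `< μ`, only as a function of the previous moves, so that as long as
player I plays legally at odd stages, the resulting `μ`-sequence is decreasing. -/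
def WinningStratII {P : Type*} (le : P → P → Prop) (μ : Ordinal) : Prop :=
  ∃ σ : (β : Ordinal) → ({γ : Ordinal // γ < β} → P) → P,
    ∀ g : Ordinal → P,
      (∀ β, β < μ →
        (EvenOrd β → g β = σ β (fun γ => g γ.1)) ∧
        (¬ EvenOrd β → ∀ γ, γ < β → le (g β) (g γ))) →
      ∀ γ β, γ < β → β < μ → le (g β) (g γ)

lemma ndom_of_isNodeOf {ν γ : Ordinal} {s : PNode} (h : IsNodeOf ν γ s) :
    ndom s = Set.Iio γ := by
  ext ε
  constructor
  · rintro ⟨v, hv⟩; exact (h.1 _ hv).1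
  · intro hε; obtain ⟨v, hv, -⟩ := h.2 ε hε; exact ⟨v, hv⟩

lemma ndom_nstar (s t : PNode) : ndom (nstar s t) = ndom t := by
  ext ε
  constructor
  · rintro ⟨v, (⟨hv, hd⟩ | ⟨hv, hd⟩)⟩
    · exact hd
    · exact ⟨v, hv⟩
  · rintro ⟨v, hv⟩
    by_cases h : ε ∈ ndom s
    · obtain ⟨w, hw⟩ := h
      exact ⟨w, Or.inl ⟨hw, ⟨v, hv⟩⟩⟩
    · exact ⟨v, Or.inr ⟨hv, h⟩⟩

lemma ndom_mono {s t : PNode} (h : s ⊆ t) : ndom s ⊆ ndom t :=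
  fun _ ⟨v, hv⟩ => ⟨v, h hv⟩

lemma Iio_inj_ord {a b : Ordinal} (h : Set.Iio a = Set.Iio b) : a = b := by
  by_contra hne
  rcases lt_or_gt_of_ne hne with h1 | h1
  · have : a ∈ Set.Iio a := h ▸ (by exact h1 : a ∈ Set.Iio b)
    exact lt_irrefl a this
  · have : b ∈ Set.Iio b := h ▸ (by exact h1 : b ∈ Set.Iio a)
    exact lt_irrefl b this

/-- for a uniformly homogeneous streamlined `κ`-tree `T`, the set `V(T)` of
vanishing levels coincides with the set of limit ordinals `α < κ` admitting a vanishing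
`α`-branch. -/
theorem statement1
    (κ : Cardinal) (hκreg : κ.IsRegular) (hκunc : Cardinal.aleph0 < κ)
    (T : Set PNode)
    (hnodes : ∀ t ∈ T, ∃ α, α < κ.ord ∧ IsNodeOf κ.ord α t)
    (hstream : IsStreamlined T)
    (hlevne : ∀ α, α < κ.ord → (level T α).Nonempty)
    (hlevsm : ∀ α, α < κ.ord → Cardinal.mk ↥(level T α) < Cardinal.lift.{1} κ)
    (hhom : UnifHomog T) :
    ∀ α, α < κ.ord →
      (α ∈ VSet T ↔ (Order.IsSuccLimit α ∧ ∃ B, IsBranch T α B ∧ ⋃₀ B ∉ T)) := by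
  intro α hα
  constructor
  · rintro ⟨hlim, hV⟩
    refine ⟨hlim, ?_⟩
    obtain ⟨x, hxT, hxdom⟩ := hlevne 0 (hlim.pos.trans hα)
    obtain ⟨B, hB, -, hU⟩ := hV x hxT ⟨0, hlim.pos, hxdom⟩
    exact ⟨B, hB, hU⟩
  · rintro ⟨hlim, B, hB, hU⟩
    refine ⟨hlim, ?_⟩
    rintro x hxT ⟨β, hβα, hxdom⟩
    obtain ⟨hBT, hBch, hBdom⟩ := hB
    have hget : ∀ δ, δ < α → ∃ b ∈ B, ndom b = Set.Iio δ := by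
      intro δ hδ
      have : δ ∈ {β : Ordinal | ∃ x ∈ B, ndom x = Set.Iio β} := by rw [hBdom]; exact hδ
      exact this
    have hdomB : ∀ b ∈ B, ∃ γ, γ < α ∧ ndom b = Set.Iio γ ∧ IsNodeOf κ.ord γ b := by
      intro b hb
      obtain ⟨γ, hγ, hnode⟩ := hnodes b (hBT hb)
      have hnd := ndom_of_isNodeOf hnode
      have hmem : γ ∈ {β : Ordinal | ∃ x ∈ B, ndom x = Set.Iio β} := ⟨b, hb, hnd⟩
      rw [hBdom] at hmem
      exact ⟨γ, hmem, hnd, hnode⟩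
    set u : PNode := ⋃₀ B with hu
    have hsub_u : ∀ b ∈ B, b ⊆ u := fun b hb p hp => ⟨b, hb, hp⟩
    have hndomu : ndom u = Set.Iio α := by
      ext ε
      constructor
      · rintro ⟨v, b, hb, hvb⟩
        obtain ⟨γ, hγ, hnd, -⟩ := hdomB b hb
        have : ε ∈ ndom b := ⟨v, hvb⟩
        rw [hnd] at this
        exact this.trans hγ
      · intro hε
        obtain ⟨b, hb, hnd⟩ := hget (ε + 1) (hlim.succ_lt hε)
        have : ε ∈ ndom b := by rw [hnd]; exact Order.lt_succ ε
        obtain ⟨v, hv⟩ := this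
        exact ⟨v, b, hb, hv⟩
    -- any point of u with first coordinate in ndom b lies in b
    have hfun : ∀ b ∈ B, ∀ p ∈ u, p.1 ∈ ndom b → p ∈ b := by
      intro b hb p hp hpd
      obtain ⟨b', hb', hpb'⟩ := hp
      rcases hBch b hb b' hb' with h | h
      · obtain ⟨v, hv⟩ := hpd
        obtain ⟨γ', -, -, hnode'⟩ := hdomB b' hb'
        have hp1 : p.1 < γ' := (hnode'.1 p hpb').1
        obtain ⟨w, -, huniq⟩ := hnode'.2 p.1 hp1
        have h1 : v = w := huniq v (h hv)
        have h2 : p.2 = w := huniq p.2 (by show (p.1, p.2) ∈ b'; rw [Prod.mk.eta]; exact hpb')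
        have : p = (p.1, v) := by rw [h1, ← h2, Prod.mk.eta]
        rw [this]
        exact hv
      · exact h hpb'
    obtain ⟨b0, hb0, hb0dom⟩ := hget β hβα
    have hb0eq : b0 = {p ∈ u | p.1 < β} := by
      ext p
      constructor
      · intro hp
        have : p.1 ∈ ndom b0 := ⟨p.2, by rw [Prod.mk.eta]; exact hp⟩
        rw [hb0dom] at this
        exact ⟨hsub_u b0 hb0 hp, this⟩
      · rintro ⟨hp, hpβ⟩
        exact hfun b0 hb0 p hp (by rw [hb0dom]; exact hpβ)
    have hxstar : ∀ b ∈ B, ndom b = Set.Iio β → nstar x b = x := by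
      intro b hb hbdom
      ext p
      constructor
      · rintro (⟨hp, -⟩ | ⟨hp, hnd⟩)
        · exact hp
        · exfalso
          apply hnd
          have : p.1 ∈ ndom b := ⟨p.2, by rw [Prod.mk.eta]; exact hp⟩
          rw [hxdom, ← hbdom]
          exact this
      · intro hp
        refine Or.inl ⟨hp, ?_⟩
        have : p.1 ∈ ndom x := ⟨p.2, by rw [Prod.mk.eta]; exact hp⟩
        rw [hbdom, ← hxdom]
        exact this
    refine ⟨{y | ∃ b ∈ B, y = nstar x b}, ⟨?_, ?_, ?_⟩, ?_, ?_⟩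
    · rintro y ⟨b, hb, rfl⟩
      exact hhom x hxT b (hBT hb)
    · rintro y ⟨b, hb, rfl⟩ z ⟨b', hb', rfl⟩
      have key : ∀ c c' : PNode, c ⊆ c' → nstar x c ⊆ nstar x c' := by
        intro c c' hcc p hp
        rcases hp with ⟨hpx, hd⟩ | ⟨hpc, hnd⟩
        · exact Or.inl ⟨hpx, ndom_mono hcc hd⟩
        · exact Or.inr ⟨hcc hpc, hnd⟩
      rcases hBch b hb b' hb' with h | h
      · exact Or.inl (key b b' h)
      · exact Or.inr (key b' b h)
    · ext γ
      constructor
      · rintro ⟨y, ⟨b, hb, rfl⟩, hnd⟩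
        obtain ⟨γ', hγ', hnd', -⟩ := hdomB b hb
        rw [ndom_nstar, hnd'] at hnd
        rw [Iio_inj_ord hnd.symm]
        exact hγ'
      · intro hγ
        obtain ⟨b, hb, hnd⟩ := hget γ hγ
        exact ⟨nstar x b, ⟨b, hb, rfl⟩, by rw [ndom_nstar, hnd]⟩
    · exact ⟨b0, hb0, (hxstar b0 hb0 hb0dom).symm⟩
    · -- ⋃₀ B' = nstar x u, and nstar x u ∈ T would contradict u ∉ T
      have hunion : ⋃₀ {y | ∃ b ∈ B, y = nstar x b} = nstar x u := by
        ext p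
        constructor
        · rintro ⟨y, ⟨b, hb, rfl⟩, hp⟩
          rcases hp with ⟨hpx, hd⟩ | ⟨hpb, hnd⟩
          · exact Or.inl ⟨hpx, ndom_mono (hsub_u b hb) hd⟩
          · exact Or.inr ⟨hsub_u b hb hpb, hnd⟩
        · rintro (⟨hpx, -⟩ | ⟨hpu, hnd⟩)
          · refine ⟨nstar x b0, ⟨b0, hb0, rfl⟩, Or.inl ⟨hpx, ?_⟩⟩
            have : p.1 ∈ ndom x := ⟨p.2, by rw [Prod.mk.eta]; exact hpx⟩
            rw [hb0dom, ← hxdom]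
            exact this
          · obtain ⟨b, hb, hpb⟩ := hpu
            exact ⟨nstar x b, ⟨b, hb, rfl⟩, Or.inr ⟨hpb, hnd⟩⟩
      rw [hunion]
      intro hw
      apply hU
      have hkey : nstar b0 (nstar x u) = u := by
        ext p
        constructor
        · rintro (⟨hp, -⟩ | ⟨hp, hnd⟩)
          · exact hsub_u b0 hb0 hp
          · rcases hp with ⟨hpx, -⟩ | ⟨hpu, -⟩
            · exfalso
              apply hnd
              have : p.1 ∈ ndom x := ⟨p.2, by rw [Prod.mk.eta]; exact hpx⟩
              rw [hb0dom, ← hxdom]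
              exact this
            · exact hpu
        · intro hp
          have hp1 : p.1 ∈ ndom u := ⟨p.2, by rw [Prod.mk.eta]; exact hp⟩
          by_cases hpβ : p.1 < β
          · refine Or.inl ⟨hfun b0 hb0 p hp (by rw [hb0dom]; exact hpβ), ?_⟩
            rw [ndom_nstar]
            exact hp1
          · refine Or.inr ⟨Or.inr ⟨hp, ?_⟩, ?_⟩
            · rw [hxdom]; exact hpβ
            · rw [hb0dom]; exact hpβ
      rw [← hkey]
      exact hhom b0 (hBT hb0) (nstar x u) hw
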